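/- Let R be a commutative ring with identity and M an R-module. The following statements are equivalent: (a) M is a fully idempotent R-module; (b) M is a fully (R∖𝔭)-idempotent R-module for each prime ideal 𝔭 of R; (c) M is a fully (R∖𝔪)-idempotent R-module for each maximal ideal 𝔪 of R; (d) M is a fully (R∖𝔪)-idempotent R-module for each maximal ideal 𝔪 of R with M_𝔪 ≠ 0. -/

import Mathlib

open Pointwise
/-- A submodule `N` of `M` is `S`-idempotent if there is `s ∈ S` with
`s • N ⊆ (N :_R M)² M ⊆ N`. -/
def Submodule.SIdempotent {R M : Type*} [CommRing R] [AddCommGroup M] [Module R M]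
    (S : Submonoid R) (N : Submodule R M) : Prop :=
  ∃ s ∈ S, s • N ≤ (N.colon ⊤) ^ 2 • (⊤ : Submodule R M) ∧
    (N.colon ⊤) ^ 2 • (⊤ : Submodule R M) ≤ N

/-- `M` is fully `S`-idempotent if every submodule is `S`-idempotent. -/
def Module.FullySIdempotent (R M : Type*) [CommRing R] [AddCommGroup M] [Module R M]
    (S : Submonoid R) : Prop :=
  ∀ N : Submodule R M, N.SIdempotent S

/-- `M` is fully idempotent if every submodule `N` equals `(N :_R M)² M`. -/
def Module.FullyIdempotent (R M : Type*) [CommRing R] [AddCommGroup M] [Module R M] : Prop :=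
  ∀ N : Submodule R M, N = (N.colon ⊤) ^ 2 • (⊤ : Submodule R M)

/-- `M` is fully idempotent iff it is fully `(R∖𝔭)`-idempotent for every prime `𝔭`, iff it
is fully `(R∖𝔪)`-idempotent for every maximal `𝔪`, iff it is fully `(R∖𝔪)`-idempotent
for every maximal `𝔪` with `M_𝔪 ≠ 0`. -/
private lemma colon_sq_smul_le {R M : Type*} [CommRing R] [AddCommGroup M] [Module R M]
    (N : Submodule R M) : (N.colon ⊤) ^ 2 • (⊤ : Submodule R M) ≤ N := by
  have h1 : (N.colon ⊤) • (⊤ : Submodule R M) ≤ N :=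
    Submodule.smul_le.2 fun r hr m hm => Submodule.mem_colon.mp hr m trivial
  calc (N.colon ⊤) ^ 2 • (⊤ : Submodule R M)
      = (N.colon ⊤) • ((N.colon ⊤) • (⊤ : Submodule R M)) := by
        rw [pow_two, mul_smul]
    _ ≤ (N.colon ⊤) • (⊤ : Submodule R M) := smul_mono_right _ le_top
    _ ≤ N := h1

private lemma easy_dir {R M : Type*} [CommRing R] [AddCommGroup M] [Module R M]
    (h : Module.FullyIdempotent R M) (S : Submonoid R) : Module.FullySIdempotent R M S :=
  fun N => ⟨1, S.one_mem, by rw [one_smul]; exact le_of_eq (h N), (h N).ge⟩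

private lemma hard_dir {R M : Type*} [CommRing R] [AddCommGroup M] [Module R M]
    (h : ∀ (m : Ideal R) (hm : m.IsMaximal),
      Nontrivial (LocalizedModule (@Ideal.primeCompl R _ m hm.isPrime) M) →
        Module.FullySIdempotent R M (@Ideal.primeCompl R _ m hm.isPrime)) :
    Module.FullyIdempotent R M := by
  intro N
  refine le_antisymm ?_ (colon_sq_smul_le N)
  intro x hx
  by_contra hxK
  set K := (N.colon ⊤) ^ 2 • (⊤ : Submodule R M) with hK
  set J : Ideal R := K.colon (Submodule.span R {x}) with hJ
  have hJne : J ≠ ⊤ := by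
    intro htop
    have h1J : (1 : R) ∈ J := by rw [htop]; trivial
    exact hxK (by simpa using Submodule.mem_colon_span_singleton.mp h1J)
  obtain ⟨m, hm, hJm⟩ := Ideal.exists_le_maximal J hJne
  have hnt : Nontrivial (LocalizedModule (@Ideal.primeCompl R _ m hm.isPrime) M) := by
    by_contra hns
    rw [not_nontrivial_iff_subsingleton] at hns
    have heq : (LocalizedModule.mk x 1 : LocalizedModule (@Ideal.primeCompl R _ m hm.isPrime) M)
        = LocalizedModule.mk 0 1 := Subsingleton.elim _ _
    obtain ⟨u, hu⟩ := LocalizedModule.mk_eq.mp heq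
    have hux : (u : R) • x = 0 := by simpa [Submonoid.smul_def] using hu
    have : (u : R) ∈ J := Submodule.mem_colon_span_singleton.mpr (by rw [hux]; exact K.zero_mem)
    exact u.2 (hJm this)
  obtain ⟨s, hs, h1, h2⟩ := h m hm hnt N
  have hsx : s • x ∈ K := h1 (Submodule.smul_mem_pointwise_smul x s N hx)
  exact hs (hJm (Submodule.mem_colon_span_singleton.mpr hsx))

theorem fullyIdempotent_iff_localized
    {R M : Type*} [CommRing R] [AddCommGroup M] [Module R M] :
    (Module.FullyIdempotent R M ↔
      ∀ (p : Ideal R) (hp : p.IsPrime),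
        Module.FullySIdempotent R M (@Ideal.primeCompl R _ p hp)) ∧
    (Module.FullyIdempotent R M ↔
      ∀ (m : Ideal R) (hm : m.IsMaximal),
        Module.FullySIdempotent R M (@Ideal.primeCompl R _ m hm.isPrime)) ∧
    (Module.FullyIdempotent R M ↔
      ∀ (m : Ideal R) (hm : m.IsMaximal),
        Nontrivial (LocalizedModule (@Ideal.primeCompl R _ m hm.isPrime) M) →
          Module.FullySIdempotent R M (@Ideal.primeCompl R _ m hm.isPrime)) := by
  refine ⟨⟨fun h p hp => easy_dir h _, fun h => hard_dir fun m hm _ => h m hm.isPrime⟩,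
    ⟨fun h m hm => easy_dir h _, fun h => hard_dir fun m hm _ => h m hm⟩,
    ⟨fun h m hm _ => easy_dir h _, fun h => hard_dir h⟩⟩
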